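/- Let A ∈ SL(2,ℤ), let G = ℤ² ⋊_A ℤ be the semidirect product, and for k ≥ 1 set m = 3^k and U_m = {((mx, my), z) : x, y, z ∈ ℤ} ≤ G. Then for every g ∈ G there exists a natural number d with 1 ≤ d ≤ 6^k such that g^d ∈ U_m. -/

import Mathlib

structure SDP (A : Matrix.SpecialLinearGroup (Fin 2) ℤ) where
  v : Fin 2 → ℤ
  z : ℤ

/-- The matrix `A^z` for `z ∈ ℤ`. -/
def SDP.mat (A : Matrix.SpecialLinearGroup (Fin 2) ℤ) (z : ℤ) :
    Matrix (Fin 2) (Fin 2) ℤ :=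
  ((A ^ z : Matrix.SpecialLinearGroup (Fin 2) ℤ) : Matrix (Fin 2) (Fin 2) ℤ)

instance (A : Matrix.SpecialLinearGroup (Fin 2) ℤ) : Group (SDP A) where
  mul p q := ⟨p.v + (SDP.mat A p.z).mulVec q.v, p.z + q.z⟩
  one := ⟨0, 0⟩
  inv p := ⟨-((SDP.mat A (-p.z)).mulVec p.v), -p.z⟩
  mul_assoc := by
    rintro ⟨av, az⟩ ⟨bv, bz⟩ ⟨cv, cz⟩
    show SDP.mk (av + (SDP.mat A az).mulVec bv + (SDP.mat A (az + bz)).mulVec cv)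
        (az + bz + cz) =
      SDP.mk (av + (SDP.mat A az).mulVec (bv + (SDP.mat A bz).mulVec cv))
        (az + (bz + cz))
    simp only [SDP.mk.injEq]
    refine ⟨?_, by ring⟩
    rw [SDP.mat, SDP.mat, SDP.mat, zpow_add, Matrix.SpecialLinearGroup.coe_mul,
      ← Matrix.mulVec_mulVec, Matrix.mulVec_add, add_assoc]
  one_mul := by
    rintro ⟨av, az⟩
    show SDP.mk ((0 : Fin 2 → ℤ) + (SDP.mat A 0).mulVec av) (0 + az) = SDP.mk av az
    simp [SDP.mat]
  mul_one := by
    rintro ⟨av, az⟩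
    show SDP.mk (av + (SDP.mat A az).mulVec (0 : Fin 2 → ℤ)) (az + 0) = SDP.mk av az
    simp
  inv_mul_cancel := by
    rintro ⟨av, az⟩
    show SDP.mk (-(SDP.mat A (-az)).mulVec av + (SDP.mat A (-az)).mulVec av)
        (-az + az) = SDP.mk 0 0
    simp


open Matrix Finset

namespace SDPProof

variable {B : Matrix (Fin 2) (Fin 2) ℤ}

lemma ch (h : B.det = 1) : B ^ 2 = B.trace • B - 1 := by
  obtain ⟨a, b, c, d, rfl⟩ : ∃ a b c d, B = !![a, b; c, d] :=
    ⟨_, _, _, _, Matrix.eta_fin_two B⟩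
  rw [Matrix.det_fin_two_of] at h
  ext i j
  fin_cases i <;> fin_cases j <;>
    simp [pow_two, Matrix.mul_apply, Fin.sum_univ_two, Matrix.one_apply,
      Matrix.trace_fin_two, Matrix.sub_apply, Matrix.smul_apply, smul_eq_mul] <;>
    first
      | ring1
      | linear_combination -h

lemma cube (h : B.det = 1) :
    B ^ 3 = (B.trace ^ 2 - 1) • B - B.trace • 1 := by
  have h2 := ch h
  have : B ^ 3 = B ^ 2 * B := by rw [pow_succ]
  rw [this, h2, sub_mul, smul_mul_assoc, ← pow_two, h2, one_mul]
  module

lemma pow4 (h : B.det = 1) :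
    B ^ 4 = (B.trace ^ 3 - 2 * B.trace) • B - (B.trace ^ 2 - 1) • 1 := by
  have h2 := ch h
  have : B ^ 4 = B ^ 3 * B := by rw [pow_succ]
  rw [this, cube h, sub_mul, smul_mul_assoc, smul_mul_assoc, ← pow_two, h2, one_mul]
  module

lemma pow5 (h : B.det = 1) :
    B ^ 5 = (B.trace ^ 4 - 3 * B.trace ^ 2 + 1) • B - (B.trace ^ 3 - 2 * B.trace) • 1 := by
  have h2 := ch h
  have : B ^ 5 = B ^ 4 * B := by rw [pow_succ]
  rw [this, pow4 h, sub_mul, smul_mul_assoc, smul_mul_assoc, ← pow_two, h2, one_mul]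
  module

lemma trace_one' : (1 : Matrix (Fin 2) (Fin 2) ℤ).trace = 2 := by
  simp [Matrix.trace_one]

lemma tr_sq (h : B.det = 1) : (B ^ 2).trace = B.trace ^ 2 - 2 := by
  rw [ch h, Matrix.trace_sub, Matrix.trace_smul, trace_one']
  simp only [smul_eq_mul]; ring

lemma tr_cube (h : B.det = 1) : (B ^ 3).trace = B.trace ^ 3 - 3 * B.trace := by
  rw [cube h, Matrix.trace_sub, Matrix.trace_smul, Matrix.trace_smul, trace_one']
  simp only [smul_eq_mul]; ring

/-- the geometric sum -/
def S (B : Matrix (Fin 2) (Fin 2) ℤ) (n : ℕ) : Matrix (Fin 2) (Fin 2) ℤ :=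
  ∑ l ∈ Finset.range n, B ^ l

lemma S_add (B : Matrix (Fin 2) (Fin 2) ℤ) (m n : ℕ) :
    S B (m + n) = S B m + B ^ m * S B n := by
  rw [S, S, S, Finset.sum_range_add, Finset.mul_sum]
  congr 1
  exact Finset.sum_congr rfl fun x _ => pow_add B m x

lemma S_expand (n : ℕ) : S B (n + 1) = S B n + B ^ n := Finset.sum_range_succ _ _

lemma S_zero : S B 0 = 0 := Finset.sum_range_zero _

lemma S3 (h : B.det = 1) : S B 3 = (B.trace + 1) • B := by
  have e : (3 : ℕ) = 0 + 1 + 1 + 1 := rfl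
  rw [e, S_expand, S_expand, S_expand, S_zero, ch h, pow_zero, pow_one]
  module

lemma S4 (h : B.det = 1) : S B 4 = (B.trace ^ 2 + B.trace) • B - B.trace • 1 := by
  have e : (4 : ℕ) = 0 + 1 + 1 + 1 + 1 := rfl
  rw [e, S_expand, S_expand, S_expand, S_expand, S_zero, ch h, cube h, pow_zero, pow_one]
  module

lemma S6 (h : B.det = 1) : S B 6 =
    (B.trace ^ 4 + B.trace ^ 3 - 2 * B.trace ^ 2 - B.trace + 1) • B -
      (B.trace ^ 3 + B.trace ^ 2 - B.trace - 1) • 1 := by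
  have e : (6 : ℕ) = 0 + 1 + 1 + 1 + 1 + 1 + 1 := rfl
  rw [e, S_expand, S_expand, S_expand, S_expand, S_expand, S_expand, S_zero,
    ch h, cube h, pow4 h, pow5 h, pow_zero, pow_one]
  module

lemma zmod_dvd {a : ℤ} (h : ((a : ZMod 3) = 0)) : (3 : ℤ) ∣ a := by
  have := (ZMod.intCast_zmod_eq_zero_iff_dvd a 3).mp h
  exact_mod_cast this

lemma key1 (h : B.det = 1) :
    ∃ d : ℕ, 1 ≤ d ∧ d ≤ 6 ∧ (∀ i j, (3 : ℤ) ∣ S B d i j) ∧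
      (3 : ℤ) ∣ (B ^ d).trace + 1 := by
  set t := B.trace with ht
  have hcase : (3 : ℤ) ∣ t ∨ (3 : ℤ) ∣ t - 1 ∨ (3 : ℤ) ∣ t + 1 := by omega
  rcases hcase with h0 | h1 | h2
  · -- t ≡ 0 : d = 4
    have htz : (t : ZMod 3) = 0 := by
      rw [ZMod.intCast_zmod_eq_zero_iff_dvd]; exact_mod_cast h0
    refine ⟨4, by norm_num, by norm_num, ?_, ?_⟩
    · intro i j
      rw [S4 h]
      simp only [Matrix.sub_apply, Matrix.smul_apply, smul_eq_mul]
      have h1 : (3 : ℤ) ∣ t ^ 2 + t := by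
        apply zmod_dvd; push_cast; rw [htz]; ring
      exact dvd_sub (h1.mul_right _) (h0.mul_right _)
    · have h4 : B ^ 4 = (B ^ 2) ^ 2 := by rw [← pow_mul]
      have hd2 : (B ^ 2).det = 1 := by rw [Matrix.det_pow, h]; norm_num
      rw [h4, tr_sq hd2, tr_sq h]
      apply zmod_dvd; push_cast; rw [htz]; decide
  · -- t ≡ 1 : d = 6
    have htz : (t : ZMod 3) = 1 := by
      have : ((t - 1 : ℤ) : ZMod 3) = 0 := by
        rw [ZMod.intCast_zmod_eq_zero_iff_dvd]; exact_mod_cast h1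
      push_cast at this; linear_combination this
    refine ⟨6, by norm_num, by norm_num, ?_, ?_⟩
    · intro i j
      rw [S6 h]
      simp only [Matrix.sub_apply, Matrix.smul_apply, smul_eq_mul]
      have hp : (3 : ℤ) ∣ t ^ 4 + t ^ 3 - 2 * t ^ 2 - t + 1 := by
        apply zmod_dvd; push_cast; rw [htz]; decide
      have hq : (3 : ℤ) ∣ t ^ 3 + t ^ 2 - t - 1 := by
        apply zmod_dvd; push_cast; rw [htz]; decide
      exact dvd_sub (hp.mul_right _) (hq.mul_right _)
    · have h6 : B ^ 6 = (B ^ 3) ^ 2 := by rw [← pow_mul]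
      have hd3 : (B ^ 3).det = 1 := by rw [Matrix.det_pow, h]; norm_num
      rw [h6, tr_sq hd3, tr_cube h]
      apply zmod_dvd; push_cast; rw [htz]; decide
  · -- t ≡ -1 : d = 3
    have htz : (t : ZMod 3) = -1 := by
      have : ((t + 1 : ℤ) : ZMod 3) = 0 := by
        rw [ZMod.intCast_zmod_eq_zero_iff_dvd]; exact_mod_cast h2
      push_cast at this; linear_combination this
    refine ⟨3, by norm_num, by norm_num, ?_, ?_⟩
    · intro i j
      rw [S3 h]
      simp only [Matrix.smul_apply, smul_eq_mul]
      exact h2.mul_right _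
    · rw [tr_cube h]
      apply zmod_dvd; push_cast; rw [htz]; decide

lemma key (h : B.det = 1) : ∀ k : ℕ, 1 ≤ k →
    ∃ d : ℕ, 1 ≤ d ∧ d ≤ 6 ^ k ∧ (∀ i j, (3 : ℤ) ^ k ∣ S B d i j) ∧
      (3 : ℤ) ∣ (B ^ d).trace + 1 := by
  intro k hk
  induction k with
  | zero => omega
  | succ k ih =>
    rcases Nat.eq_or_lt_of_le hk with hk1 | hk1
    · have hk0 : k = 0 := by omega
      subst hk0
      obtain ⟨d, h1, h6, hdvd, htr⟩ := key1 h
      exact ⟨d, h1, by simpa using h6, by simpa using hdvd, htr⟩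
    · obtain ⟨d, hd1, hd6, hdvd, htr⟩ := ih (by omega)
      set C := B ^ d with hC
      have hdetC : C.det = 1 := by rw [hC, Matrix.det_pow, h]; norm_num
      refine ⟨3 * d, by omega, ?_, ?_, ?_⟩
      · calc 3 * d ≤ 3 * 6 ^ k := by omega
        _ ≤ 6 * 6 ^ k := by
            have : (0:ℕ) < 6 ^ k := Nat.pow_pos (by norm_num)
            omega
        _ = 6 ^ (k + 1) := by ring
      · -- divisibility of entries of S B (3d)
        have hsplit : S B (3 * d) = S B d + C * S B d + C ^ 2 * S B d := by
          have : 3 * d = d + (d + d) := by ring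
          rw [this, S_add, S_add, mul_add, ← mul_assoc, ← hC, ← pow_two, add_assoc]
        have hform : S B (3 * d) = (C.trace + 1) • (C * S B d) := by
          rw [hsplit, ch hdetC, sub_mul, smul_mul_assoc, one_mul]
          module
        intro i j
        rw [hform]
        simp only [Matrix.smul_apply, smul_eq_mul]
        have hCS : (3 : ℤ) ^ k ∣ (C * S B d) i j := by
          rw [Matrix.mul_apply]
          exact Finset.dvd_sum fun l _ => (hdvd l j).mul_left _
        have := mul_dvd_mul htr hCS
        calc (3 : ℤ) ^ (k + 1) = 3 * 3 ^ k := by ring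
        _ ∣ _ := this
      · have hpow : B ^ (3 * d) = C ^ 3 := by rw [hC, ← pow_mul, mul_comm]
        rw [hpow, tr_cube hdetC]
        have hs : (3 : ℤ) ∣ C.trace + 1 := htr
        have htz : ((C.trace : ZMod 3)) = -1 := by
          have : ((C.trace + 1 : ℤ) : ZMod 3) = 0 := by
            rw [ZMod.intCast_zmod_eq_zero_iff_dvd]; exact_mod_cast hs
          push_cast at this; linear_combination this
        apply zmod_dvd; push_cast; rw [htz]; decide

end SDPProof

namespace SDPProof

lemma mat_nat_mul (A : Matrix.SpecialLinearGroup (Fin 2) ℤ) (z : ℤ) (n : ℕ) :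
    SDP.mat A ((n : ℤ) * z) = (SDP.mat A z) ^ n := by
  rw [SDP.mat, SDP.mat, mul_comm, _root_.zpow_mul, zpow_natCast,
    Matrix.SpecialLinearGroup.coe_pow]

lemma sdp_pow (A : Matrix.SpecialLinearGroup (Fin 2) ℤ) (v : Fin 2 → ℤ) (z : ℤ) (n : ℕ) :
    (SDP.mk v z : SDP A) ^ n = SDP.mk ((S (SDP.mat A z) n).mulVec v) ((n : ℤ) * z) := by
  induction n with
  | zero =>
    show (SDP.mk 0 0 : SDP A) = _
    rw [S_zero, Matrix.zero_mulVec]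
    norm_num
  | succ n ih =>
    rw [pow_succ, ih]
    show SDP.mk ((S (SDP.mat A z) n).mulVec v + (SDP.mat A ((n : ℤ) * z)).mulVec v)
        ((n : ℤ) * z + z) = _
    rw [mat_nat_mul, S_expand, Matrix.add_mulVec]
    congr 1
    push_cast
    ring

end SDPProof

/-- Lemma 3.14 (key step): for `k ≥ 1` and `m = 3^k`, every `g ∈ ℤ² ⋊_A ℤ` has a power
`g^d` with `1 ≤ d ≤ 6^k` lying in `U_m = {((mx, my), z) : x, y, z ∈ ℤ}`. -/
theorem sdp_pow_mem_Um (A : Matrix.SpecialLinearGroup (Fin 2) ℤ)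
    (k : ℕ) (hk : 1 ≤ k) (g : SDP A) :
    ∃ d : ℕ, 1 ≤ d ∧ d ≤ 6 ^ k ∧
      ∃ x y z : ℤ, g ^ d = ⟨![((3 : ℤ) ^ k) * x, ((3 : ℤ) ^ k) * y], z⟩ := by
  obtain ⟨v, z⟩ := g
  have hdet : (SDP.mat A z).det = 1 := Matrix.SpecialLinearGroup.det_coe _
  obtain ⟨d, hd1, hd6, hdvd, -⟩ := SDPProof.key hdet k hk
  set B := SDP.mat A z with hB
  have hx0 : (3 : ℤ) ^ k ∣ (SDPProof.S B d).mulVec v 0 := by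
    have e : (SDPProof.S B d).mulVec v 0 = ∑ l, SDPProof.S B d 0 l * v l := rfl
    rw [e]; exact Finset.dvd_sum fun l _ => ((hdvd 0 l).mul_right (v l))
  have hx1 : (3 : ℤ) ^ k ∣ (SDPProof.S B d).mulVec v 1 := by
    have e : (SDPProof.S B d).mulVec v 1 = ∑ l, SDPProof.S B d 1 l * v l := rfl
    rw [e]; exact Finset.dvd_sum fun l _ => ((hdvd 1 l).mul_right (v l))
  obtain ⟨x, hx⟩ := hx0
  obtain ⟨y, hy⟩ := hx1
  refine ⟨d, hd1, hd6, x, y, (d : ℤ) * z, ?_⟩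
  rw [SDPProof.sdp_pow]
  congr 1
  funext i
  fin_cases i
  · simpa using hx
  · simpa using hy
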